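/- The Markov chain M on the state space {D_1,…,D_k, L_1,…,L_k} with transition matrix P given by P(L_j, D_i) = w_i/((1+w)n) for all i, j; P(L_i, L_i) = 1 − w/((1+w)n) for all i; P(D_i, L_i) = 1/((1+w)n) for all i; P(D_i, D_i) = 1 − 1/((1+w)n) for all i; and all other entries 0, has stationary distribution π given by π(L_i) = (w_i/w)/(1+w) and π(D_i) = w_i/(1+w); that is, π is a probability distribution and π P = π. -/

import Mathlib

open MeasureTheory ProbabilityTheory Finset Real
open scoped ENNReal Classical

namespace Diversification

/-- A configuration of the Diversification protocol: each of the `n` agents has a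
colour in `Fin k` and a shade bit (`true` = dark, `false` = light). -/
abbrev Conf (n k : ℕ) := Fin n → Fin k × Bool

variable {n k : ℕ}

/-- `C_i`: the number of agents with colour `i` (any shade). -/
def colourCount (s : Conf n k) (i : Fin k) : ℕ :=
  (Finset.univ.filter fun u => (s u).1 = i).card

/-- `A_i`: the number of dark-shaded agents with colour `i`. -/
def darkCount (s : Conf n k) (i : Fin k) : ℕ :=
  (Finset.univ.filter fun u => (s u).1 = i ∧ (s u).2 = true).card

/-- `a_i`: the number of light-shaded agents with colour `i`. -/
def lightCount (s : Conf n k) (i : Fin k) : ℕ :=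
  (Finset.univ.filter fun u => (s u).1 = i ∧ (s u).2 = false).card

/-- `a`: the total number of light-shaded agents. -/
def lightTotal (s : Conf n k) : ℕ := ∑ i, lightCount s i

/-- `A`: the total number of dark-shaded agents. -/
def darkTotal (s : Conf n k) : ℕ := ∑ i, darkCount s i

/-- The agent with index `v` in the enumeration of the `n-1` agents different from `u`. -/
def other (u : Fin n) (v : Fin (n - 1)) : Fin n :=
  if (v : ℕ) < (u : ℕ) then ⟨v, by have := v.isLt; have := u.isLt; omega⟩
  else ⟨(v : ℕ) + 1, by have := v.isLt; have := u.isLt; omega⟩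

/-- One step of the Diversification protocol driven by the random seed `(u, v, r)`:
agent `u` is scheduled and observes agent `other u v` (uniform among the others);
if `u` is light and the observed agent dark, `u` adopts its colour and becomes dark;
if both are dark with the same colour `i`, `u` becomes light iff `r ≤ 1/wᵢ`
(`r` is uniform on `[0,1]`); otherwise nothing changes. -/
noncomputable def step (w : Fin k → ℝ) (s : Conf n k) (q : Fin n × Fin (n - 1) × ℝ) :
    Conf n k :=
  let u := q.1
  let v := other u q.2.1
  let r := q.2.2
  if (s u).2 = false ∧ (s v).2 = true then
    Function.update s u ((s v).1, true)
  else if (s u).2 = true ∧ (s v).2 = true ∧ (s u).1 = (s v).1 ∧ r ≤ 1 / w (s u).1 then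
    Function.update s u ((s u).1, false)
  else s

/-- The trajectory of the protocol from an initial configuration, given the seeds. -/
noncomputable def traj (w : Fin k → ℝ) (init : Conf n k)
    (seeds : ℕ → Fin n × Fin (n - 1) × ℝ) : ℕ → Conf n k
  | 0 => init
  | t + 1 => step w (traj w init seeds t) (seeds t)

/-- The configuration process `ξ(t)` as a function of the random environment. -/
noncomputable def xi {Ω : Type*} (w : Fin k → ℝ) (init : Conf n k)
    (seeds : ℕ → Ω → Fin n × Fin (n - 1) × ℝ) (t : ℕ) (ω : Ω) : Conf n k :=
  traj w init (fun s => seeds s ω) t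

/-- The distribution of one random seed: a uniform agent, a uniform index among the
other `n-1` agents, and an independent uniform real in `[0,1]`. -/
noncomputable def seedMeasure (n : ℕ) (hn : 2 ≤ n) : Measure (Fin n × Fin (n - 1) × ℝ) :=
  haveI : Nonempty (Fin n) := ⟨⟨0, by omega⟩⟩
  haveI : Nonempty (Fin (n - 1)) := ⟨⟨0, by omega⟩⟩
  (PMF.uniformOfFintype (Fin n)).toMeasure.prod
    ((PMF.uniformOfFintype (Fin (n - 1))).toMeasure.prod
      (volume.restrict (Set.Icc (0 : ℝ) 1)))

/-- The random environment driving the protocol: independent seeds, each with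
distribution `seedMeasure`. -/
def IsSeeds {Ω : Type*} [MeasurableSpace Ω] (n : ℕ) (hn : 2 ≤ n) (P : Measure Ω)
    (seeds : ℕ → Ω → Fin n × Fin (n - 1) × ℝ) : Prop :=
  (∀ t, Measurable (seeds t)) ∧
    iIndepFun seeds P ∧
      ∀ t, P.map (seeds t) = seedMeasure n hn

/-- The potential `φ` on dark counts. -/
noncomputable def phi (w : Fin k → ℝ) (s : Conf n k) : ℝ :=
  ∑ i, ∑ j, ((darkCount s i : ℝ) / w i - (darkCount s j : ℝ) / w j) ^ 2

/-- The potential `ψ` on light counts. -/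
noncomputable def psi (w : Fin k → ℝ) (s : Conf n k) : ℝ :=
  ∑ i, ∑ j, ((lightCount s i : ℝ) / w i - (lightCount s j : ℝ) / w j) ^ 2

/-- The potential on total colour counts. -/
noncomputable def potC (w : Fin k → ℝ) (s : Conf n k) : ℝ :=
  ∑ i, ∑ j, ((colourCount s i : ℝ) / w i - (colourCount s j : ℝ) / w j) ^ 2

/-- The set `E(δ)` of well-balanced configurations. -/
def regionE (w : Fin k → ℝ) (δ : ℝ) (s : Conf n k) : Prop :=
  (∀ i, (1 - δ) * n / (1 + ∑ j, w j) ≤ (darkCount s i : ℝ) / w i ∧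
      (darkCount s i : ℝ) / w i ≤ (1 + δ) * n / (1 + ∑ j, w j)) ∧
    ((1 - δ) * n / (1 + ∑ j, w j) ≤ (lightTotal s : ℝ) ∧
      (lightTotal s : ℝ) ≤ (1 + δ) * n / (1 + ∑ j, w j))

/-- Region `R₁ = {a/n ≥ (1-ε)/(w+1)}`. -/
def regionR1 (w : Fin k → ℝ) (ε : ℝ) (s : Conf n k) : Prop :=
  (1 - ε) / ((∑ i, w i) + 1) ≤ (lightTotal s : ℝ) / n

/-- Region `S₁ = {a/n ≥ (1-2ε)/(w+1)}`. -/
def regionS1 (w : Fin k → ℝ) (ε : ℝ) (s : Conf n k) : Prop :=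
  (1 - 2 * ε) / ((∑ i, w i) + 1) ≤ (lightTotal s : ℝ) / n

/-- Region `R₂`. -/
def regionR2 (w : Fin k → ℝ) (ε : ℝ) (s : Conf n k) : Prop :=
  (∀ i, (1 - 3 * ε) * w i / (1 + ∑ j, w j) ≤ (darkCount s i : ℝ) / n) ∧ regionS1 w ε s

/-- Region `S₂`. -/
def regionS2 (w : Fin k → ℝ) (ε : ℝ) (s : Conf n k) : Prop :=
  (∀ i, (1 - 4 * ε) * w i / (1 + ∑ j, w j) ≤ (darkCount s i : ℝ) / n) ∧ regionS1 w ε s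

/-- The natural filtration `F_t` generated by the configurations up to time `t`. -/
noncomputable def confFiltration {Ω : Type*} (w : Fin k → ℝ) (init : Conf n k)
    (seeds : ℕ → Ω → Fin n × Fin (n - 1) × ℝ) (t : ℕ) : MeasurableSpace Ω :=
  ⨆ s ∈ Set.Iic t, MeasurableSpace.comap (xi w init seeds s) ⊤

/-- Conditional variance given a sub-σ-algebra. -/
noncomputable def condVar {Ω : Type*} (m : MeasurableSpace Ω) {m0 : MeasurableSpace Ω}
    (P : Measure Ω) (f : Ω → ℝ) : Ω → ℝ :=
  MeasureTheory.condExp m P fun ω => (f ω - MeasureTheory.condExp m P f ω) ^ 2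


/-- the approximating Markov chain on the states
`D_1,…,D_k` (encoded `Sum.inl i`) and `L_1,…,L_k` (encoded `Sum.inr i`) with the
given transition matrix has stationary distribution `π(D_i) = wᵢ/(1+w)`,
`π(L_i) = (wᵢ/w)/(1+w)`. -/
theorem stationary_distribution (n k : ℕ) (hn : 2 ≤ n) (hk : 1 ≤ k)
    (w : Fin k → ℝ) (hw : ∀ i, 1 ≤ w i)
    (hwn : (∑ i, w i) / ((1 + ∑ i, w i) * n) ≤ 1)
    (P : Fin k ⊕ Fin k → Fin k ⊕ Fin k → ℝ)
    (hLD : ∀ i j : Fin k, P (Sum.inr j) (Sum.inl i) = w i / ((1 + ∑ l, w l) * n))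
    (hLL : ∀ i : Fin k, P (Sum.inr i) (Sum.inr i) = 1 - (∑ l, w l) / ((1 + ∑ l, w l) * n))
    (hDL : ∀ i : Fin k, P (Sum.inl i) (Sum.inr i) = 1 / ((1 + ∑ l, w l) * n))
    (hDD : ∀ i : Fin k, P (Sum.inl i) (Sum.inl i) = 1 - 1 / ((1 + ∑ l, w l) * n))
    (hzero : ∀ i j : Fin k, i ≠ j →
      P (Sum.inl i) (Sum.inl j) = 0 ∧ P (Sum.inl i) (Sum.inr j) = 0 ∧
        P (Sum.inr i) (Sum.inr j) = 0)
    (sd : Fin k ⊕ Fin k → ℝ)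
    (hsdD : ∀ i : Fin k, sd (Sum.inl i) = w i / (1 + ∑ l, w l))
    (hsdL : ∀ i : Fin k, sd (Sum.inr i) = (w i / ∑ l, w l) / (1 + ∑ l, w l)) :
    (∀ s, 0 ≤ sd s) ∧ (∑ s, sd s) = 1 ∧ ∀ s', (∑ s, sd s * P s s') = sd s' := by
  have hk' : Nonempty (Fin k) := ⟨⟨0, hk⟩⟩
  set W : ℝ := ∑ l, w l with hWdef
  have hW : 0 < W := Finset.sum_pos (fun i _ => lt_of_lt_of_le one_pos (hw i)) ⟨Classical.arbitrary _, Finset.mem_univ _⟩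
  have h1W : (0:ℝ) < 1 + W := by linarith
  have hn0 : (0:ℝ) < n := by positivity
  refine ⟨?_, ?_, ?_⟩
  · rintro (i | i)
    · rw [hsdD]; exact div_nonneg (by linarith [hw i]) h1W.le
    · rw [hsdL]; exact div_nonneg (div_nonneg (by linarith [hw i]) hW.le) h1W.le
  · rw [Fintype.sum_sum_type]
    simp only [hsdD, hsdL]
    rw [← Finset.sum_div, ← Finset.sum_div, ← Finset.sum_div, ← hWdef]
    field_simp
    ring
  · rintro (j | j) <;> rw [Fintype.sum_sum_type]
    · have h1 : ∑ i, sd (Sum.inl i) * P (Sum.inl i) (Sum.inl j)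
          = sd (Sum.inl j) * P (Sum.inl j) (Sum.inl j) := by
        refine Finset.sum_eq_single j (fun i _ hij => ?_) (by simp)
        rw [(hzero i j hij).1, mul_zero]
      rw [h1, hDD, hsdD]
      have h2 : ∑ i, sd (Sum.inr i) * P (Sum.inr i) (Sum.inl j)
          = (1 / (1 + W)) * (w j / ((1 + W) * n)) := by
        rw [Finset.sum_congr rfl (fun i _ => by rw [hsdL i, hLD j i]),
          ← Finset.sum_mul, ← Finset.sum_div, ← Finset.sum_div, ← hWdef,
          div_self hW.ne']
      rw [h2]
      field_simp
      ring
    · have h1 : ∑ i, sd (Sum.inl i) * P (Sum.inl i) (Sum.inr j)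
          = sd (Sum.inl j) * P (Sum.inl j) (Sum.inr j) := by
        refine Finset.sum_eq_single j (fun i _ hij => ?_) (by simp)
        rw [(hzero i j hij).2.1, mul_zero]
      have h2 : ∑ i, sd (Sum.inr i) * P (Sum.inr i) (Sum.inr j)
          = sd (Sum.inr j) * P (Sum.inr j) (Sum.inr j) := by
        refine Finset.sum_eq_single j (fun i _ hij => ?_) (by simp)
        rw [(hzero i j hij).2.2, mul_zero]
      rw [h1, h2, hDL, hLL, hsdD, hsdL]
      field_simp
      ring

end Diversification
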